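/- Let G be a directed graph on a set V such that every vertex has exactly one out-neighbor (given by a map f : V → V with f(x) ≠ x for all x), no two vertices carry directed edges in both directions, and the underlying undirected graph of G contains no cycle. Suppose a vertex x has two distinct in-neighbors y and z (so ⟨y,x⟩ and ⟨z,x⟩ are directed edges) whose backward clusters C^b_y and C^b_z are both infinite. Then the three sets C^b_y, C^b_z, and the forward orbit O = {f^{(n)}(x) : n ≥ 1} are pairwise disjoint infinite sets, and no two of these three sets are joined by a path in the underlying undirected graph that avoids the vertex x; in particular, the weak component of x is infinite and deleting x from it leaves at least three distinct infinite connected components (x is an encounter point). -/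

import Mathlib

section Aux

variable {V : Type*} (G : V → V → Prop) (f : V → V)
    (hf : ∀ x : V, f x ≠ x)
    (hG : ∀ x y : V, G x y ↔ y = f x)

/-- A walk from `a` to `f^[k] a` in the underlying undirected graph. -/
def stmt6WalkTo (a : V) : (k : ℕ) → (SimpleGraph.fromRel G).Walk a (f^[k] a)
  | 0 => SimpleGraph.Walk.nil
  | (k+1) =>
      ((stmt6WalkTo a k).concat
        ((SimpleGraph.fromRel_adj G _ _).mpr
          ⟨fun h => hf _ h.symm, Or.inl ((hG _ _).mpr rfl)⟩)).copy rfl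
        (Function.iterate_succ_apply' f k a).symm

lemma stmt6WalkTo_support (a : V) (k : ℕ) :
    (stmt6WalkTo G f hf hG a k).support = (List.range (k+1)).map (fun i => f^[i] a) := by
  induction k with
  | zero => simp [stmt6WalkTo]
  | succ k ih =>
      rw [stmt6WalkTo, SimpleGraph.Walk.support_copy, SimpleGraph.Walk.support_concat, ih,
        List.range_succ (n := k+1), List.map_append]
      simp only [List.map_cons, List.map_nil]
      rw [Function.iterate_succ_apply']

lemma stmt6WalkTo_length (a : V) (k : ℕ) :
    (stmt6WalkTo G f hf hG a k).length = k := by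
  induction k with
  | zero => rfl
  | succ k ih => rw [stmt6WalkTo, SimpleGraph.Walk.length_copy,
      SimpleGraph.Walk.length_concat, ih]

end Aux

/-- in a directed graph with out-degree exactly one (given by `f`), no
bidirectional pairs, and acyclic underlying undirected graph, a vertex `x` with two
distinct in-neighbors having infinite backward clusters is an encounter point: the two
backward clusters and the forward orbit of `x` are pairwise disjoint infinite sets, no
two of which are joined by an undirected path avoiding `x`; in particular the weak
component of `x` is infinite. -/
theorem stmt6 {V : Type*} (G : V → V → Prop) (f : V → V)
    (hf : ∀ x : V, f x ≠ x)
    (hG : ∀ x y : V, G x y ↔ y = f x)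
    (hnobi : ∀ x y : V, G x y → ¬ G y x)
    (hacyc : (SimpleGraph.fromRel G).IsAcyclic)
    (x y z : V) (hyz : y ≠ z) (hyx : G y x) (hzx : G z x)
    (hyinf : {u : V | Relation.ReflTransGen G u y}.Infinite)
    (hzinf : {u : V | Relation.ReflTransGen G u z}.Infinite) :
    -- the three sets are pairwise disjoint ...
    ({u : V | Relation.ReflTransGen G u y} ∩ {u : V | Relation.ReflTransGen G u z} = ∅ ∧
     {u : V | Relation.ReflTransGen G u y} ∩ {u : V | ∃ n : ℕ, 1 ≤ n ∧ f^[n] x = u} = ∅ ∧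
     {u : V | Relation.ReflTransGen G u z} ∩ {u : V | ∃ n : ℕ, 1 ≤ n ∧ f^[n] x = u} = ∅) ∧
    -- ... infinite sets ...
    ({u : V | Relation.ReflTransGen G u y}.Infinite ∧
     {u : V | Relation.ReflTransGen G u z}.Infinite ∧
     {u : V | ∃ n : ℕ, 1 ≤ n ∧ f^[n] x = u}.Infinite) ∧
    ((∀ u ∈ {u : V | Relation.ReflTransGen G u y}, ∀ w ∈ {u : V | Relation.ReflTransGen G u z},
        ¬ Relation.ReflTransGen (fun a b => (G a b ∨ G b a) ∧ a ≠ x ∧ b ≠ x) u w) ∧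
     (∀ u ∈ {u : V | Relation.ReflTransGen G u y}, ∀ w ∈ {u : V | ∃ n : ℕ, 1 ≤ n ∧ f^[n] x = u},
        ¬ Relation.ReflTransGen (fun a b => (G a b ∨ G b a) ∧ a ≠ x ∧ b ≠ x) u w) ∧
     (∀ u ∈ {u : V | Relation.ReflTransGen G u z}, ∀ w ∈ {u : V | ∃ n : ℕ, 1 ≤ n ∧ f^[n] x = u},
        ¬ Relation.ReflTransGen (fun a b => (G a b ∨ G b a) ∧ a ≠ x ∧ b ≠ x) u w)) ∧
    -- ... in particular the weak component of `x` is infinite.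
    {u : V | Relation.ReflTransGen (fun a b => G a b ∨ G b a) x u}.Infinite := by
  -- f has no periodic points
  have noper : ∀ (u : V) (n : ℕ), 0 < n → f^[n] u ≠ u := by
    intro u n hn hfix
    have hper : Function.IsPeriodicPt f n u := hfix
    set p := Function.minimalPeriod f u with hp
    have hppos : 0 < p := hper.minimalPeriod_pos hn
    have hpper : Function.IsPeriodicPt f p u := Function.isPeriodicPt_minimalPeriod f u
    have hmin : ∀ k, 0 < k → Function.IsPeriodicPt f k u → p ≤ k :=
      fun k hk hku => hku.minimalPeriod_le hk
    -- p ≠ 1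
    have hp1 : p ≠ 1 := by
      intro h
      have : f u = u := by simpa [h, Function.IsPeriodicPt, Function.IsFixedPt] using hpper
      exact hf u this
    -- p ≠ 2
    have hp2 : p ≠ 2 := by
      intro h
      have h2 : f (f u) = u := by
        have := hpper
        rw [h] at this
        simpa [Function.IsPeriodicPt, Function.IsFixedPt,
          Function.iterate_succ_apply'] using this
      exact hnobi u (f u) ((hG _ _).mpr rfl) ((hG _ _).mpr h2.symm)
    have hp3 : 3 ≤ p := by omega
    -- injectivity of iterates in (0, p]
    have injp : ∀ i j, 0 < i → i ≤ p → 0 < j → j ≤ p → f^[i] u = f^[j] u → i = j := by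
      have key : ∀ i j, 0 < i → i < j → j ≤ p → f^[i] u ≠ f^[j] u := by
        intro i j hi hij hjp heq
        have h1 : f^[(p - j) + j] u = u := by
          rw [Nat.sub_add_cancel hjp]; exact hpper
        have h2 : f^[(p - j) + i] u = u := by
          rw [Function.iterate_add_apply, heq, ← Function.iterate_add_apply]
          exact h1
        have hlt : (p - j) + i < p := by omega
        have := hmin _ (by omega) h2
        omega
      intro i j hi hip hj hjp heq
      rcases lt_trichotomy i j with h | h | h
      · exact absurd heq (key i j hi h hjp)
      · exact h
      · exact absurd heq.symm (key j i hj h hip)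
    -- two distinct paths from u to f u
    have hadj : (SimpleGraph.fromRel G).Adj u (f u) :=
      (SimpleGraph.fromRel_adj G _ _).mpr ⟨fun h => hf _ h.symm, Or.inl ((hG _ _).mpr rfl)⟩
    have e : f^[p-1] (f u) = u := by
      have : f^[p-1] (f u) = f^[(p-1)+1] u := by
        rw [Function.iterate_add_apply]; simp
      rw [this, Nat.sub_add_cancel (by omega)]
      exact hpper
    let W : (SimpleGraph.fromRel G).Walk (f u) u := (stmt6WalkTo G f hf hG (f u) (p-1)).copy rfl e
    have hWsup : W.support = (List.range p).map (fun i => f^[i+1] u) := by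
      show ((stmt6WalkTo G f hf hG (f u) (p-1)).copy rfl e).support = _
      rw [SimpleGraph.Walk.support_copy, stmt6WalkTo_support]
      have : p - 1 + 1 = p := by omega
      rw [this]
      apply List.map_congr_left
      intro i _
      rw [← Function.iterate_succ_apply]
    have hWpath : W.reverse.IsPath := by
      rw [SimpleGraph.Walk.isPath_def, SimpleGraph.Walk.support_reverse, List.nodup_reverse,
        hWsup]
      refine List.Nodup.map_on ?_ List.nodup_range
      intro i hi j hj heq
      rw [List.mem_range] at hi hj
      have := injp (i+1) (j+1) (by omega) (by omega) (by omega) (by omega) heq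
      omega
    have hsingle : (SimpleGraph.Walk.cons hadj SimpleGraph.Walk.nil).IsPath := by
      simp [SimpleGraph.Walk.isPath_def, hadj.ne]
    rw [SimpleGraph.isAcyclic_iff_path_unique] at hacyc
    have := hacyc ⟨SimpleGraph.Walk.cons hadj SimpleGraph.Walk.nil, hsingle⟩ ⟨W.reverse, hWpath⟩
    have hlen := congrArg (fun q : (SimpleGraph.fromRel G).Path u (f u) => q.1.length) this
    simp only [SimpleGraph.Walk.length_cons, SimpleGraph.Walk.length_nil,
      SimpleGraph.Walk.length_reverse] at hlen
    have : W.length = p - 1 := by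
      show ((stmt6WalkTo G f hf hG (f u) (p-1)).copy rfl e).length = p - 1
      rw [SimpleGraph.Walk.length_copy, stmt6WalkTo_length]
    omega
  -- iterates at a fixed base point are injective in the exponent
  have itinj : ∀ (c : V) (a b : ℕ), f^[a] c = f^[b] c → a = b := by
    have key : ∀ (c : V) (a b : ℕ), a < b → f^[a] c ≠ f^[b] c := by
      intro c a b hab heq
      have : f^[b - a] (f^[a] c) = f^[a] c := by
        rw [← Function.iterate_add_apply]
        have : b - a + a = b := by omega
        rw [this, ← heq]
      exact noper _ _ (by omega) this
    intro c a b heq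
    rcases lt_trichotomy a b with h | h | h
    · exact absurd heq (key c a b h)
    · exact h
    · exact absurd heq.symm (key c b a h)
  -- reachability = iteration
  have reach : ∀ (u v : V), Relation.ReflTransGen G u v → ∃ a : ℕ, f^[a] u = v := by
    intro u v h
    induction h with
    | refl => exact ⟨0, rfl⟩
    | tail _ hstep ih =>
        obtain ⟨a, ha⟩ := ih
        refine ⟨a + 1, ?_⟩
        rw [Function.iterate_succ_apply', ha, ← (hG _ _).mp hstep]
  have hfy : f y = x := ((hG _ _).mp hyx).symm
  have hfz : f z = x := ((hG _ _).mp hzx).symm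
  -- merging lemma for the x-avoiding undirected relation
  set R : V → V → Prop := fun a b => (G a b ∨ G b a) ∧ a ≠ x ∧ b ≠ x with hR
  set M : V → V → Prop := fun u w => ∃ m n : ℕ, f^[m] u = f^[n] w ∧
      (∀ i ≤ m, f^[i] u ≠ x) ∧ (∀ j ≤ n, f^[j] w ≠ x) with hM
  have Mtrans : ∀ u v w, M u v → M v w → M u w := by
    rintro u v w ⟨m, n, h1, a1, a2⟩ ⟨p, q, h2, a3, a4⟩
    rcases le_or_gt n p with hnp | hpn
    · refine ⟨(p - n) + m, q, ?_, ?_, a4⟩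
      · calc f^[(p-n)+m] u = f^[p-n] (f^[m] u) := Function.iterate_add_apply f _ _ _
          _ = f^[p-n] (f^[n] v) := by rw [h1]
          _ = f^[(p-n)+n] v := (Function.iterate_add_apply f _ _ _).symm
          _ = f^[p] v := by congr 1; omega
          _ = f^[q] w := h2
      · intro i hi
        rcases le_or_gt i m with him | him
        · exact a1 i him
        · have e1 : f^[i] u = f^[(i-m)+n] v := by
            calc f^[i] u = f^[(i-m)+m] u := by congr 1; omega
              _ = f^[i-m] (f^[m] u) := Function.iterate_add_apply f _ _ _
              _ = f^[i-m] (f^[n] v) := by rw [h1]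
              _ = f^[(i-m)+n] v := (Function.iterate_add_apply f _ _ _).symm
          rw [e1]
          exact a3 _ (by omega)
    · refine ⟨m, (n - p) + q, ?_, a1, ?_⟩
      · calc f^[m] u = f^[n] v := h1
          _ = f^[(n-p)+p] v := by congr 1; omega
          _ = f^[n-p] (f^[p] v) := Function.iterate_add_apply f _ _ _
          _ = f^[n-p] (f^[q] w) := by rw [h2]
          _ = f^[(n-p)+q] w := (Function.iterate_add_apply f _ _ _).symm
      · intro j hj
        rcases le_or_gt j q with hjq | hjq
        · exact a4 j hjq
        · have e1 : f^[j] w = f^[(j-q)+p] v := by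
            calc f^[j] w = f^[(j-q)+q] w := by congr 1; omega
              _ = f^[j-q] (f^[q] w) := Function.iterate_add_apply f _ _ _
              _ = f^[j-q] (f^[p] v) := by rw [h2]
              _ = f^[(j-q)+p] v := (Function.iterate_add_apply f _ _ _).symm
          rw [e1]
          exact a2 _ (by omega)
  have Mstep : ∀ a b, R a b → M a b := by
    rintro a b ⟨hab, hax, hbx⟩
    rcases hab with h | h
    · exact ⟨1, 0, by simp [← (hG _ _).mp h], by
        intro i hi
        interval_cases i
        · simpa using hax
        · simpa [← (hG _ _).mp h] using hbx, by simpa using hbx⟩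
    · exact ⟨0, 1, by simp [← (hG _ _).mp h], by simpa using hax, by
        intro j hj
        interval_cases j
        · simpa using hbx
        · simpa [← (hG _ _).mp h] using hax⟩
  have MofR : ∀ u w, Relation.ReflTransGen R u w → u = w ∨ M u w := by
    intro u w h
    induction h with
    | refl => exact Or.inl rfl
    | tail huv hstep ih =>
        rcases ih with rfl | hM'
        · exact Or.inr (Mstep _ _ hstep)
        · exact Or.inr (Mtrans _ _ _ hM' (Mstep _ _ hstep))
  -- disjointness claims
  have d1 : {u : V | Relation.ReflTransGen G u y} ∩ {u : V | Relation.ReflTransGen G u z} = ∅ := by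
    ext u
    simp only [Set.mem_inter_iff, Set.mem_setOf_eq, Set.mem_empty_iff_false, iff_false, not_and]
    intro h1 h2
    obtain ⟨a, ha⟩ := reach _ _ h1
    obtain ⟨b, hb⟩ := reach _ _ h2
    have ha' : f^[a+1] u = x := by rw [Function.iterate_succ_apply', ha, hfy]
    have hb' : f^[b+1] u = x := by rw [Function.iterate_succ_apply', hb, hfz]
    have hab : a = b := by have := itinj u (a+1) (b+1) (ha'.trans hb'.symm); omega
    exact hyz (ha ▸ hab ▸ hb)
  have d2 : ∀ (v : V), G v x → {u : V | Relation.ReflTransGen G u v} ∩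
      {u : V | ∃ n : ℕ, 1 ≤ n ∧ f^[n] x = u} = ∅ := by
    intro v hvx
    have hfv : f v = x := ((hG _ _).mp hvx).symm
    ext u
    simp only [Set.mem_inter_iff, Set.mem_setOf_eq, Set.mem_empty_iff_false, iff_false, not_and]
    rintro h1 ⟨k, hk, hku⟩
    obtain ⟨a, ha⟩ := reach _ _ h1
    have : f^[(a+1)+k] x = x := by
      rw [Function.iterate_add_apply, hku, Function.iterate_succ_apply', ha, hfv]
    have := itinj x ((a+1)+k) 0 this
    omega
  -- forward orbit infinite
  have Oinf : {u : V | ∃ n : ℕ, 1 ≤ n ∧ f^[n] x = u}.Infinite := by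
    refine Set.infinite_of_injective_forall_mem (f := fun n : ℕ => f^[n+1] x) ?_ ?_
    · intro a b hab
      have := itinj x (a+1) (b+1) hab
      omega
    · intro n
      exact ⟨n+1, by omega, rfl⟩
  -- no-path claims
  have np1 : ∀ u ∈ {u : V | Relation.ReflTransGen G u y},
      ∀ w ∈ {u : V | Relation.ReflTransGen G u z},
      ¬ Relation.ReflTransGen R u w := by
    intro u hu w hw hpath
    rcases MofR _ _ hpath with rfl | ⟨m, n, hmn, au, aw⟩
    · exact absurd (Set.mem_inter hu hw) (by rw [d1]; exact Set.notMem_empty u)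
    · obtain ⟨a, ha⟩ := reach _ _ hu
      obtain ⟨b, hb⟩ := reach _ _ hw
      have ha' : f^[a+1] u = x := by rw [Function.iterate_succ_apply', ha, hfy]
      have hb' : f^[b+1] w = x := by rw [Function.iterate_succ_apply', hb, hfz]
      have hma : m ≤ a := by
        by_contra hma
        exact au (a+1) (by omega) ha'
      have hnb : n ≤ b := by
        by_contra hnb
        exact aw (b+1) (by omega) hb'
      have hy' : f^[(a-m)+1] (f^[m] u) = x := by
        rw [← Function.iterate_add_apply]
        have : ((a-m)+1) + m = a + 1 := by omega
        rw [this, ha']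
      have hz' : f^[(b-n)+1] (f^[m] u) = x := by
        rw [hmn, ← Function.iterate_add_apply]
        have : ((b-n)+1) + n = b + 1 := by omega
        rw [this, hb']
      have heq : a - m = b - n := by
        have := itinj _ _ _ (hy'.trans hz'.symm); omega
      apply hyz
      rw [← ha, ← hb]
      calc f^[a] u = f^[(a-m)+m] u := by congr 1; omega
        _ = f^[a-m] (f^[m] u) := Function.iterate_add_apply f _ _ _
        _ = f^[b-n] (f^[n] w) := by rw [heq, hmn]
        _ = f^[(b-n)+n] w := (Function.iterate_add_apply f _ _ _).symm
        _ = f^[b] w := by congr 1; omega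
  have np2 : ∀ (v : V), G v x → ∀ u ∈ {u : V | Relation.ReflTransGen G u v},
      ∀ w ∈ {u : V | ∃ n : ℕ, 1 ≤ n ∧ f^[n] x = u},
      ¬ Relation.ReflTransGen R u w := by
    intro v hvx u hu w hw hpath
    have hfv : f v = x := ((hG _ _).mp hvx).symm
    rcases MofR _ _ hpath with rfl | ⟨m, n, hmn, au, aw⟩
    · exact absurd (Set.mem_inter hu hw) (by rw [d2 v hvx]; exact Set.notMem_empty u)
    · obtain ⟨a, ha⟩ := reach _ _ hu
      obtain ⟨k, hk, hkw⟩ := hw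
      have ha' : f^[a+1] u = x := by rw [Function.iterate_succ_apply', ha, hfv]
      have hma : m ≤ a := by
        by_contra hma
        exact au (a+1) (by omega) ha'
      have : f^[((a-m)+1) + (n + k)] x = x := by
        calc f^[((a-m)+1)+(n+k)] x = f^[(a-m)+1] (f^[n+k] x) := Function.iterate_add_apply f _ _ _
          _ = f^[(a-m)+1] (f^[n] (f^[k] x)) := by
                congr 1
                exact Function.iterate_add_apply f n k x
          _ = f^[(a-m)+1] (f^[n] w) := by rw [hkw]
          _ = f^[(a-m)+1] (f^[m] u) := by rw [hmn]
          _ = f^[((a-m)+1)+m] u := (Function.iterate_add_apply f _ _ _).symm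
          _ = f^[a+1] u := by congr 1; omega
          _ = x := ha'
      have := itinj x _ 0 this
      omega
  -- weak component infinite
  have wk : ∀ k : ℕ, Relation.ReflTransGen (fun a b => G a b ∨ G b a) x (f^[k] x) := by
    intro k
    induction k with
    | zero => exact Relation.ReflTransGen.refl
    | succ k ih =>
        refine Relation.ReflTransGen.tail ih (Or.inl ((hG _ _).mpr ?_))
        rw [Function.iterate_succ_apply']
  refine ⟨⟨d1, d2 y hyx, d2 z hzx⟩, ⟨hyinf, hzinf, Oinf⟩, ⟨np1, np2 y hyx, np2 z hzx⟩, ?_⟩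
  apply Oinf.mono
  rintro u ⟨k, _, hku⟩
  exact hku ▸ wk k
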